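/- Every nilpotent element x ∈ 𝔰𝔭_{2n}(k) is Sp_{2n}(k)-conjugate to an element of 𝔫: there exists g ∈ Sp_{2n}(k) with g·x·g⁻¹ of block form [[a,b],[0,ᵀa]] with a strictly upper triangular and ᵀb = b. Equivalently, the nilpotent cone of 𝔰𝔭_{2n}(k) equals ⋃_{g ∈ Sp_{2n}(k)} g·𝔫·g⁻¹. -/

import Mathlib

open Matrix

/-- The Gram matrix `J = [[0, 1ₙ], [1ₙ, 0]]` of the symplectic form. -/
def Jsp (k : Type*) [Field k] (n : ℕ) : Matrix (Fin n ⊕ Fin n) (Fin n ⊕ Fin n) k :=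
  Matrix.fromBlocks 0 1 1 0

set_option linter.unusedSectionVars false

variable {k : Type} [Field k] [CharP k 2] {n : ℕ}

lemma Jsp_apply (p q : Fin n ⊕ Fin n) :
    Jsp k n p q = if q = Sum.swap p then 1 else 0 := by
  rcases p with i | i <;> rcases q with j | j <;>
    simp [Jsp, fromBlocks, one_apply, eq_comm]

lemma Jsp_mulVec (u : Fin n ⊕ Fin n → k) (p : Fin n ⊕ Fin n) :
    (Jsp k n *ᵥ u) p = u (Sum.swap p) := by
  simp [mulVec, dotProduct, Jsp_apply]

lemma Jsp_mul_apply (M : Matrix (Fin n ⊕ Fin n) (Fin n ⊕ Fin n) k) (p q : Fin n ⊕ Fin n) :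
    (Jsp k n * M) p q = M (Sum.swap p) q := by
  simp [mul_apply, Jsp_apply]

lemma Jsp_transpose : (Jsp k n)ᵀ = Jsp k n := by
  ext p q
  rw [transpose_apply, Jsp_apply, Jsp_apply]
  rcases p with i | i <;> rcases q with j | j <;> simp [eq_comm]

lemma transpose_mul_Jsp (M : Matrix (Fin n ⊕ Fin n) (Fin n ⊕ Fin n) k) (p q : Fin n ⊕ Fin n) :
    (Mᵀ * Jsp k n) p q = M (Sum.swap q) p := by
  have : Mᵀ * Jsp k n = (Jsp k n * M)ᵀ := by
    rw [transpose_mul, Jsp_transpose]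
  rw [this, transpose_apply, Jsp_mul_apply]

lemma sp_iff (M : Matrix (Fin n ⊕ Fin n) (Fin n ⊕ Fin n) k) :
    Mᵀ * Jsp k n = Jsp k n * M ↔ ∀ p q, M (Sum.swap q) p = M (Sum.swap p) q := by
  constructor
  · intro h p q
    have := congrFun (congrFun h p) q
    rwa [transpose_mul_Jsp, Jsp_mul_apply] at this
  · intro h
    ext p q
    rw [transpose_mul_Jsp, Jsp_mul_apply]
    exact h p q

lemma Jsp_mul_Jsp : Jsp k n * Jsp k n = 1 := by
  ext p q
  rw [Jsp_mul_apply, Jsp_apply, one_apply]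
  rcases p with i | i <;> rcases q with j | j <;> simp [eq_comm]

lemma Jsp_selfdot (u : Fin n ⊕ Fin n → k) : (Jsp k n *ᵥ u) ⬝ᵥ u = 0 := by
  simp only [dotProduct, Jsp_mulVec, Fintype.sum_sum_type, Sum.swap_inl, Sum.swap_inr]
  rw [← Finset.sum_add_distrib]
  apply Finset.sum_eq_zero
  intro i _
  rw [mul_comm]
  exact CharTwo.add_self_eq_zero _

-- vecMulVec helpers
lemma mul_vecMulVec' (M : Matrix (Fin n ⊕ Fin n) (Fin n ⊕ Fin n) k) (a b : Fin n ⊕ Fin n → k) :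
    M * vecMulVec a b = vecMulVec (M *ᵥ a) b := by
  ext p q
  simp only [mul_apply, vecMulVec_apply, mulVec, dotProduct]
  rw [Finset.sum_mul]
  exact Finset.sum_congr rfl fun r _ => by ring

lemma vecMulVec_mul' (a b : Fin n ⊕ Fin n → k) (M : Matrix (Fin n ⊕ Fin n) (Fin n ⊕ Fin n) k) :
    vecMulVec a b * M = vecMulVec a (Mᵀ *ᵥ b) := by
  ext p q
  simp only [mul_apply, vecMulVec_apply, mulVec, dotProduct, transpose_apply, Finset.mul_sum]
  apply Finset.sum_congr rfl
  intro r _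
  ring

lemma vecMulVec_mul_vecMulVec (a b c d : Fin n ⊕ Fin n → k) :
    vecMulVec a b * vecMulVec c d = (b ⬝ᵥ c) • vecMulVec a d := by
  ext p q
  simp only [mul_apply, vecMulVec_apply, Matrix.smul_apply, dotProduct, smul_eq_mul]
  rw [Finset.sum_mul]
  exact Finset.sum_congr rfl fun r _ => by ring

lemma vecMulVec_transpose' (a b : Fin n ⊕ Fin n → k) :
    (vecMulVec a b)ᵀ = vecMulVec b a := by
  ext p q
  simp [vecMulVec_apply, mul_comm]

lemma vecMulVec_mulVec' (a b v : Fin n ⊕ Fin n → k) :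
    vecMulVec a b *ᵥ v = (b ⬝ᵥ v) • a := by
  ext p
  simp only [vecMulVec_apply, mulVec, dotProduct, Pi.smul_apply, smul_eq_mul]
  rw [Finset.sum_mul]
  exact Finset.sum_congr rfl fun r _ => by ring

-- Transvections
noncomputable def Tv (u : Fin n ⊕ Fin n → k) (c : k) : Matrix (Fin n ⊕ Fin n) (Fin n ⊕ Fin n) k :=
  1 + c • vecMulVec u (Jsp k n *ᵥ u)

lemma Jsp_mulVec_eq (u : Fin n ⊕ Fin n → k) : Jsp k n *ᵥ u = fun p => u (Sum.swap p) := by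
  funext p; exact Jsp_mulVec u p

lemma Tv_transpose (u : Fin n ⊕ Fin n → k) (c : k) :
    (Tv u c)ᵀ = 1 + c • vecMulVec (Jsp k n *ᵥ u) u := by
  rw [Tv, transpose_add, transpose_one, transpose_smul, vecMulVec_transpose']

lemma madd (M : Matrix (Fin n ⊕ Fin n) (Fin n ⊕ Fin n) k) : M + M = 0 := by
  ext p q
  exact CharTwo.add_self_eq_zero _

lemma Tv_mul_Tv (u : Fin n ⊕ Fin n → k) (c : k) : Tv u c * Tv u c = 1 := by
  have hVV : vecMulVec u (Jsp k n *ᵥ u) * vecMulVec u (Jsp k n *ᵥ u) = 0 := by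
    rw [_root_.vecMulVec_mul_vecMulVec, Jsp_selfdot, zero_smul]
  simp only [Tv, add_mul, mul_add, one_mul, mul_one, Matrix.smul_mul, Matrix.mul_smul, smul_smul,
    hVV, smul_zero, add_zero]
  rw [add_assoc, madd, add_zero]

lemma Tv_isUnit (u : Fin n ⊕ Fin n → k) (c : k) : IsUnit (Tv u c) :=
  ⟨⟨Tv u c, Tv u c, Tv_mul_Tv u c, Tv_mul_Tv u c⟩, rfl⟩

lemma Tv_symplectic (u : Fin n ⊕ Fin n → k) (c : k) :
    (Tv u c)ᵀ * Jsp k n * Tv u c = Jsp k n := by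
  have hJt : (Jsp k n)ᵀ *ᵥ u = Jsp k n *ᵥ u := by rw [Jsp_transpose]
  have hW : vecMulVec (Jsp k n *ᵥ u) u * Jsp k n
      = vecMulVec (Jsp k n *ᵥ u) (Jsp k n *ᵥ u) := by rw [vecMulVec_mul', hJt]
  have hJV : Jsp k n * vecMulVec u (Jsp k n *ᵥ u)
      = vecMulVec (Jsp k n *ᵥ u) (Jsp k n *ᵥ u) := mul_vecMulVec' _ _ _
  have hWV : vecMulVec (Jsp k n *ᵥ u) (Jsp k n *ᵥ u) * vecMulVec u (Jsp k n *ᵥ u) = 0 := by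
    rw [_root_.vecMulVec_mul_vecMulVec, Jsp_selfdot, zero_smul]
  rw [Tv_transpose, Tv]
  simp only [add_mul, mul_add, one_mul, mul_one, Matrix.smul_mul, Matrix.mul_smul, smul_smul,
    hW, hJV, hWV, smul_zero, add_zero]
  rw [add_assoc, madd, add_zero]

lemma Tv_mulVec (u : Fin n ⊕ Fin n → k) (c : k) (v : Fin n ⊕ Fin n → k) :
    Tv u c *ᵥ v = v + (c * ((Jsp k n *ᵥ u) ⬝ᵥ v)) • u := by
  rw [Tv, add_mulVec, one_mulVec, smul_mulVec, vecMulVec_mulVec', smul_smul]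

-- the symmetric bilinear form
lemma beta_comm (a b : Fin n ⊕ Fin n → k) : (Jsp k n *ᵥ a) ⬝ᵥ b = (Jsp k n *ᵥ b) ⬝ᵥ a := by
  simp only [dotProduct, Jsp_mulVec, Fintype.sum_sum_type, Sum.swap_inl, Sum.swap_inr]
  rw [add_comm]
  congr 1 <;> exact Finset.sum_congr rfl fun i _ => by ring

lemma Tv_moves (v w : Fin n ⊕ Fin n → k) (h : (Jsp k n *ᵥ w) ⬝ᵥ v ≠ 0) :
    ∃ T : Matrix (Fin n ⊕ Fin n) (Fin n ⊕ Fin n) k,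
      IsUnit T ∧ Tᵀ * Jsp k n * T = Jsp k n ∧ T *ᵥ v = w := by
  set u := w + v with hu
  have hbu : (Jsp k n *ᵥ u) ⬝ᵥ v = (Jsp k n *ᵥ w) ⬝ᵥ v := by
    rw [hu, mulVec_add, add_dotProduct, Jsp_selfdot, add_zero]
  refine ⟨Tv u (((Jsp k n *ᵥ w) ⬝ᵥ v)⁻¹), Tv_isUnit _ _, Tv_symplectic _ _, ?_⟩
  rw [Tv_mulVec, hbu, inv_mul_cancel₀ h, one_smul, hu]
  funext p
  simp only [Pi.add_apply]
  rw [add_comm (w p), ← add_assoc, CharTwo.add_self_eq_zero, zero_add]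

lemma exists_beta_ne_zero (v : Fin n ⊕ Fin n → k) (hv : v ≠ 0) :
    ∃ z, (Jsp k n *ᵥ z) ⬝ᵥ v ≠ 0 := by
  obtain ⟨p, hp⟩ := Function.ne_iff.mp hv
  refine ⟨Pi.single (Sum.swap p) 1, ?_⟩
  have hz : Jsp k n *ᵥ Pi.single (Sum.swap p) 1 = Pi.single p (1:k) := by
    funext q
    rw [Jsp_mulVec]
    have hiff : Sum.swap q = Sum.swap p ↔ q = p :=
      ⟨fun h => by simpa using congrArg Sum.swap h, fun h => by rw [h]⟩
    simp [Pi.single_apply, hiff]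
  rw [hz]
  simpa [dotProduct, Pi.single_apply] using hp

lemma sp_transitive (v w : Fin n ⊕ Fin n → k) (hv : v ≠ 0) (hw : w ≠ 0) :
    ∃ g : Matrix (Fin n ⊕ Fin n) (Fin n ⊕ Fin n) k,
      IsUnit g ∧ gᵀ * Jsp k n * g = Jsp k n ∧ g *ᵥ v = w := by
  rcases eq_or_ne ((Jsp k n *ᵥ w) ⬝ᵥ v) 0 with h0 | h0
  · -- need intermediate z with β v z ≠ 0 and β z w ≠ 0
    obtain ⟨z1, hz1⟩ := exists_beta_ne_zero v hv
    obtain ⟨z2', hz2⟩ := exists_beta_ne_zero w hw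
    -- β z w ≠ 0 means (Jsp *ᵥ w) ⬝ᵥ z ≠ 0 ; convert via beta_comm
    have hz2' : (Jsp k n *ᵥ w) ⬝ᵥ z2' ≠ 0 := by rwa [beta_comm] at hz2
    have hz1' : (Jsp k n *ᵥ z1) ⬝ᵥ v ≠ 0 := hz1
    -- find common z
    have : ∃ z, (Jsp k n *ᵥ z) ⬝ᵥ v ≠ 0 ∧ (Jsp k n *ᵥ w) ⬝ᵥ z ≠ 0 := by
      rcases eq_or_ne ((Jsp k n *ᵥ w) ⬝ᵥ z1) 0 with e1 | e1
      · rcases eq_or_ne ((Jsp k n *ᵥ z2') ⬝ᵥ v) 0 with e2 | e2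
        · refine ⟨z1 + z2', ?_, ?_⟩
          · rw [mulVec_add, add_dotProduct, e2, add_zero]; exact hz1'
          · rw [dotProduct_add, e1, zero_add]; exact hz2'
        · exact ⟨z2', e2, hz2'⟩
      · exact ⟨z1, hz1', e1⟩
    obtain ⟨z, hvz, hzw⟩ := this
    have hzv : (Jsp k n *ᵥ z) ⬝ᵥ v ≠ 0 := hvz
    obtain ⟨T1, hT1u, hT1s, hT1v⟩ := Tv_moves v z hzv
    have hzw' : (Jsp k n *ᵥ w) ⬝ᵥ z ≠ 0 := hzw
    obtain ⟨T2, hT2u, hT2s, hT2v⟩ := Tv_moves z w hzw'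
    refine ⟨T2 * T1, hT2u.mul hT1u, ?_, ?_⟩
    · rw [transpose_mul]
      calc T1ᵀ * T2ᵀ * Jsp k n * (T2 * T1) = T1ᵀ * (T2ᵀ * Jsp k n * T2) * T1 := by
            noncomm_ring
        _ = T1ᵀ * Jsp k n * T1 := by rw [hT2s]
        _ = Jsp k n := hT1s
    · rw [← mulVec_mulVec, hT1v, hT2v]
  · obtain ⟨T, hTu, hTs, hTv⟩ := Tv_moves v w h0
    exact ⟨T, hTu, hTs, hTv⟩

-- nilpotency of strictly triangular matrices
lemma pow_strict_zero {ι : Type*} [Fintype ι] [DecidableEq ι] (f : ι → ℕ) (N : ℕ)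
    (hb : ∀ i, f i < N) (M : Matrix ι ι k) (h : ∀ p q, f q ≤ f p → M p q = 0) :
    M ^ N = 0 := by
  have key : ∀ m p q, f q < f p + m → (M ^ m) p q = 0 := by
    intro m
    induction m with
    | zero =>
      intro p q hpq
      simp only [Nat.add_zero] at hpq
      rw [pow_zero, one_apply_ne]
      intro hc; rw [hc] at hpq; exact lt_irrefl _ hpq
    | succ m IH =>
      intro p q hpq
      rw [pow_succ, mul_apply]
      apply Finset.sum_eq_zero
      intro r _
      rcases lt_or_ge (f r) (f p + m) with hr | hr
      · rw [IH p r hr, zero_mul]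
      · rw [h r q (by omega), mul_zero]
  ext p q
  rw [key N p q (by have := hb q; omega)]
  simp

def ordIdx {n : ℕ} : Fin n ⊕ Fin n → ℕ :=
  Sum.elim (fun i => (i : ℕ)) (fun i => 2 * n - 1 - (i : ℕ))

lemma ordIdx_lt (p : Fin n ⊕ Fin n) : ordIdx p < 2 * n := by
  rcases p with i | i <;> simp [ordIdx] <;> omega

lemma ordIdx_inl_le_inl {i j : Fin n} : ordIdx (Sum.inl j) ≤ ordIdx (Sum.inl i) ↔ (j:ℕ) ≤ i :=
  Iff.rfl

-- conjugation preserves the Lie algebra condition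
lemma conj_sp {g x : Matrix (Fin n ⊕ Fin n) (Fin n ⊕ Fin n) k}
    (hg : IsUnit g) (hgs : gᵀ * Jsp k n * g = Jsp k n) (hx : xᵀ * Jsp k n = Jsp k n * x) :
    (g * x * g⁻¹)ᵀ * Jsp k n = Jsp k n * (g * x * g⁻¹) := by
  have hd : IsUnit g.det := (Matrix.isUnit_iff_isUnit_det g).mp hg
  have h1 : gᵀ * Jsp k n = Jsp k n * g⁻¹ := by
    have := congrArg (· * g⁻¹) hgs
    simpa [Matrix.mul_assoc, Matrix.mul_nonsing_inv g hd] using this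
  have h2 : g⁻¹ᵀ * Jsp k n = Jsp k n * g := by
    have := congrArg Matrix.transpose h1
    rw [transpose_mul, transpose_mul, Jsp_transpose] at this
    exact this.symm
  calc (g * x * g⁻¹)ᵀ * Jsp k n
      = g⁻¹ᵀ * xᵀ * (gᵀ * Jsp k n) := by rw [transpose_mul, transpose_mul]; noncomm_ring
    _ = g⁻¹ᵀ * xᵀ * (Jsp k n * g⁻¹) := by rw [h1]
    _ = g⁻¹ᵀ * (xᵀ * Jsp k n) * g⁻¹ := by noncomm_ring
    _ = g⁻¹ᵀ * (Jsp k n * x) * g⁻¹ := by rw [hx]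
    _ = (g⁻¹ᵀ * Jsp k n) * (x * g⁻¹) := by noncomm_ring
    _ = (Jsp k n * g) * (x * g⁻¹) := by rw [h2]
    _ = Jsp k n * (g * x * g⁻¹) := by noncomm_ring

lemma inv_symplectic {g : Matrix (Fin n ⊕ Fin n) (Fin n ⊕ Fin n) k}
    (hg : IsUnit g) (hgs : gᵀ * Jsp k n * g = Jsp k n) :
    g⁻¹ᵀ * Jsp k n * g⁻¹ = Jsp k n := by
  have hd : IsUnit g.det := (Matrix.isUnit_iff_isUnit_det g).mp hg
  have h1 : gᵀ * Jsp k n = Jsp k n * g⁻¹ := by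
    have := congrArg (· * g⁻¹) hgs
    simpa [Matrix.mul_assoc, Matrix.mul_nonsing_inv g hd] using this
  have h2 : g⁻¹ᵀ * Jsp k n = Jsp k n * g := by
    have := congrArg Matrix.transpose h1
    rw [transpose_mul, transpose_mul, Jsp_transpose] at this
    exact this.symm
  rw [h2, Matrix.mul_assoc, Matrix.mul_nonsing_inv g hd, Matrix.mul_one]

-- the embedding of the middle block
def ιm {n : ℕ} : Fin n ⊕ Fin n → Fin (n+1) ⊕ Fin (n+1) := Sum.map Fin.succ Fin.succ

def Esp (n : ℕ) : (Fin (n+1) ⊕ Fin (n+1)) ≃ ((Fin n ⊕ Fin n) ⊕ (Fin 1 ⊕ Fin 1)) where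
  toFun := Sum.elim
    (fun i => Fin.cases (Sum.inr (Sum.inl 0)) (fun j => Sum.inl (Sum.inl j)) i)
    (fun i => Fin.cases (Sum.inr (Sum.inr 0)) (fun j => Sum.inl (Sum.inr j)) i)
  invFun := Sum.elim
    (Sum.elim (fun j => Sum.inl j.succ) (fun j => Sum.inr j.succ))
    (Sum.elim (fun _ => Sum.inl 0) (fun _ => Sum.inr 0))
  left_inv := by
    rintro (i | i) <;> (induction i using Fin.cases <;> simp)
  right_inv := by
    rintro ((j | j) | (u | u)) <;> simp [Fin.fin_one_eq_zero]

@[simp] lemma Esp_inl_zero : Esp n (Sum.inl 0) = Sum.inr (Sum.inl 0) := by simp [Esp]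
@[simp] lemma Esp_inr_zero : Esp n (Sum.inr 0) = Sum.inr (Sum.inr 0) := by simp [Esp]
@[simp] lemma Esp_ιm (p : Fin n ⊕ Fin n) : Esp n (ιm p) = Sum.inl p := by
  rcases p with j | j <;> simp [Esp, ιm]

lemma ordIdx_ιm (p : Fin n ⊕ Fin n) : ordIdx (ιm p) = ordIdx p + 1 := by
  rcases p with j | j
  · simp [ordIdx, ιm]
  · simp only [ordIdx, ιm, Sum.map_inr, Sum.elim_inr, Fin.val_succ]
    have := j.isLt
    omega

lemma Jsp_decomp :
    Jsp k (n+1) = (fromBlocks (Jsp k n) 0 0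
      (fromBlocks (0 : Matrix (Fin 1) (Fin 1) k) 1 1 0)).submatrix (Esp n) (Esp n) := by
  ext p q
  rcases p with i | i <;> rcases q with j | j <;>
    induction i using Fin.cases <;> induction j using Fin.cases <;>
      simp [Jsp, Esp, fromBlocks, submatrix, one_apply, Fin.succ_ne_zero,
        (Fin.succ_ne_zero _).symm, Fin.succ_inj]

-- extension of a small matrix by identity on the two extra basis vectors
def extM (B : Matrix (Fin n ⊕ Fin n) (Fin n ⊕ Fin n) k) :
    Matrix (Fin (n+1) ⊕ Fin (n+1)) (Fin (n+1) ⊕ Fin (n+1)) k :=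
  (fromBlocks B 0 0 (1 : Matrix (Fin 1 ⊕ Fin 1) (Fin 1 ⊕ Fin 1) k)).submatrix (Esp n) (Esp n)

section extM
variable (B : Matrix (Fin n ⊕ Fin n) (Fin n ⊕ Fin n) k) (i j : Fin n)

@[simp] lemma extM_ll : extM B (Sum.inl i.succ) (Sum.inl j.succ) = B (Sum.inl i) (Sum.inl j) := by
  simp [extM, Esp, fromBlocks]
@[simp] lemma extM_lr : extM B (Sum.inl i.succ) (Sum.inr j.succ) = B (Sum.inl i) (Sum.inr j) := by
  simp [extM, Esp, fromBlocks]
@[simp] lemma extM_rl : extM B (Sum.inr i.succ) (Sum.inl j.succ) = B (Sum.inr i) (Sum.inl j) := by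
  simp [extM, Esp, fromBlocks]
@[simp] lemma extM_rr : extM B (Sum.inr i.succ) (Sum.inr j.succ) = B (Sum.inr i) (Sum.inr j) := by
  simp [extM, Esp, fromBlocks]
@[simp] lemma extM_l0 : extM B (Sum.inl i.succ) (Sum.inl 0) = 0 := by
  simp [extM, Esp, fromBlocks]
@[simp] lemma extM_l0' : extM B (Sum.inl i.succ) (Sum.inr 0) = 0 := by
  simp [extM, Esp, fromBlocks]
@[simp] lemma extM_r0 : extM B (Sum.inr i.succ) (Sum.inl 0) = 0 := by
  simp [extM, Esp, fromBlocks]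
@[simp] lemma extM_r0' : extM B (Sum.inr i.succ) (Sum.inr 0) = 0 := by
  simp [extM, Esp, fromBlocks]
@[simp] lemma extM_0l : extM B (Sum.inl 0) (Sum.inl j.succ) = 0 := by
  simp [extM, Esp, fromBlocks]
@[simp] lemma extM_0r : extM B (Sum.inl 0) (Sum.inr j.succ) = 0 := by
  simp [extM, Esp, fromBlocks]
@[simp] lemma extM_0l' : extM B (Sum.inr 0) (Sum.inl j.succ) = 0 := by
  simp [extM, Esp, fromBlocks]
@[simp] lemma extM_0r' : extM B (Sum.inr 0) (Sum.inr j.succ) = 0 := by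
  simp [extM, Esp, fromBlocks]
@[simp] lemma extM_00a : extM B (Sum.inl 0) (Sum.inl 0) = 1 := by
  simp [extM, Esp, fromBlocks, one_apply]
@[simp] lemma extM_00b : extM B (Sum.inl 0) (Sum.inr 0) = 0 := by
  simp [extM, Esp, fromBlocks, one_apply]
@[simp] lemma extM_00c : extM B (Sum.inr 0) (Sum.inl 0) = 0 := by
  simp [extM, Esp, fromBlocks, one_apply]
@[simp] lemma extM_00d : extM B (Sum.inr 0) (Sum.inr 0) = 1 := by
  simp [extM, Esp, fromBlocks, one_apply]

@[simp] lemma extM_im_l0 (p : Fin n ⊕ Fin n) : extM B (ιm p) (Sum.inl 0) = 0 := by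
  rcases p with i | i <;> simp [ιm]
@[simp] lemma extM_im_r0 (p : Fin n ⊕ Fin n) : extM B (ιm p) (Sum.inr 0) = 0 := by
  rcases p with i | i <;> simp [ιm]
@[simp] lemma extM_0im (q : Fin n ⊕ Fin n) : extM B (Sum.inl 0) (ιm q) = 0 := by
  rcases q with j | j <;> simp [ιm]
@[simp] lemma extM_0im' (q : Fin n ⊕ Fin n) : extM B (Sum.inr 0) (ιm q) = 0 := by
  rcases q with j | j <;> simp [ιm]
@[simp] lemma extM_ls_im (q : Fin n ⊕ Fin n) :
    extM B (Sum.inl i.succ) (ιm q) = B (Sum.inl i) q := by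
  rcases q with j | j <;> simp [ιm]
@[simp] lemma extM_rs_im (q : Fin n ⊕ Fin n) :
    extM B (Sum.inr i.succ) (ιm q) = B (Sum.inr i) q := by
  rcases q with j | j <;> simp [ιm]
@[simp] lemma extM_im_ls (p : Fin n ⊕ Fin n) :
    extM B (ιm p) (Sum.inl j.succ) = B p (Sum.inl j) := by
  rcases p with i | i <;> simp [ιm]
@[simp] lemma extM_im_rs (p : Fin n ⊕ Fin n) :
    extM B (ιm p) (Sum.inr j.succ) = B p (Sum.inr j) := by
  rcases p with i | i <;> simp [ιm]

lemma extM_mul (C : Matrix (Fin n ⊕ Fin n) (Fin n ⊕ Fin n) k) :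
    extM B * extM C = extM (B * C) := by
  rw [extM, extM, extM, submatrix_mul_equiv, fromBlocks_multiply]
  congr 2 <;> simp

lemma extM_symplectic (h : Bᵀ * Jsp k n * B = Jsp k n) :
    (extM B)ᵀ * Jsp k (n+1) * extM B = Jsp k (n+1) := by
  have key : (fromBlocks B 0 0 (1 : Matrix (Fin 1 ⊕ Fin 1) (Fin 1 ⊕ Fin 1) k))ᵀ *
      fromBlocks (Jsp k n) 0 0 (fromBlocks (0 : Matrix (Fin 1) (Fin 1) k) 1 1 0) *
      fromBlocks B 0 0 (1 : Matrix (Fin 1 ⊕ Fin 1) (Fin 1 ⊕ Fin 1) k)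
      = fromBlocks (Jsp k n) 0 0 (fromBlocks (0 : Matrix (Fin 1) (Fin 1) k) 1 1 0) := by
    rw [fromBlocks_transpose, fromBlocks_multiply, fromBlocks_multiply]
    congr 1 <;> simp [h]
  rw [Jsp_decomp, extM, transpose_submatrix, submatrix_mul_equiv, submatrix_mul_equiv, key]

end extM

lemma conjPowMat {g x : Matrix (Fin n ⊕ Fin n) (Fin n ⊕ Fin n) k} (hg : IsUnit g.det) (N : ℕ) :
    (g * x * g⁻¹) ^ N = g * x ^ N * g⁻¹ := by
  induction N with
  | zero => rw [pow_zero, pow_zero, Matrix.mul_one, Matrix.mul_nonsing_inv g hg]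
  | succ N IHN =>
    rw [pow_succ, IHN, pow_succ]
    calc g * x ^ N * g⁻¹ * (g * x * g⁻¹) = g * x ^ N * (g⁻¹ * g) * x * g⁻¹ := by noncomm_ring
      _ = g * (x ^ N * x) * g⁻¹ := by rw [Matrix.nonsing_inv_mul g hg]; noncomm_ring

lemma mainLemma : ∀ (n : ℕ) (x : Matrix (Fin n ⊕ Fin n) (Fin n ⊕ Fin n) k),
    xᵀ * Jsp k n = Jsp k n * x → IsNilpotent x →
    ∃ g : Matrix (Fin n ⊕ Fin n) (Fin n ⊕ Fin n) k,
      IsUnit g ∧ gᵀ * Jsp k n * g = Jsp k n ∧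
      ∀ p q, ordIdx q ≤ ordIdx p → (g * x * g⁻¹) p q = 0 := by
  intro n
  induction n with
  | zero =>
    intro x _ _
    refine ⟨1, isUnit_one, by simp, ?_⟩
    intro p q _
    rcases p with i | i <;> exact i.elim0
  | succ n IH =>
    intro x hsp hnil
    -- a kernel vector
    have hdet : x.det = 0 := by
      obtain ⟨N, hN⟩ := hnil
      haveI : Nonempty (Fin (n+1) ⊕ Fin (n+1)) := ⟨Sum.inl 0⟩
      rcases Nat.eq_zero_or_pos N with rfl | hNpos
      · have h10 : (1 : Matrix (Fin (n+1) ⊕ Fin (n+1)) (Fin (n+1) ⊕ Fin (n+1)) k) = 0 := by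
          simpa using hN
        have h1k : (1 : k) = 0 := by
          have := congrFun (congrFun h10 (Sum.inl 0)) (Sum.inl 0)
          simpa [one_apply] using this
        exact absurd h1k one_ne_zero
      · have hp : x.det ^ N = 0 := by
          rw [← Matrix.det_pow, hN]
          exact Matrix.det_zero
        exact (pow_eq_zero_iff (by omega : N ≠ 0)).mp hp
    obtain ⟨v, hv0, hxv⟩ := Matrix.exists_mulVec_eq_zero_iff.mpr hdet
    have he1 : (Pi.single (Sum.inl 0) (1:k) : Fin (n+1) ⊕ Fin (n+1) → k) ≠ 0 := by
      intro hc
      have := congrFun hc (Sum.inl 0)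
      simp at this
    obtain ⟨g1, hg1u, hg1s, hg1v⟩ := sp_transitive v (Pi.single (Sum.inl 0) 1) hv0 he1
    have hg1d : IsUnit g1.det := (Matrix.isUnit_iff_isUnit_det g1).mp hg1u
    set x1 := g1 * x * g1⁻¹ with hx1
    have hsp1 : x1ᵀ * Jsp k (n+1) = Jsp k (n+1) * x1 := conj_sp hg1u hg1s hsp
    have hsp1' := (sp_iff x1).mp hsp1
    have hnil1 : IsNilpotent x1 := by
      obtain ⟨N, hN⟩ := hnil
      exact ⟨N, by rw [hx1, conjPowMat hg1d, hN, Matrix.mul_zero, Matrix.zero_mul]⟩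
    have hcol : ∀ p, x1 p (Sum.inl 0) = 0 := by
      have hinv : g1⁻¹ *ᵥ Pi.single (Sum.inl 0) (1:k) = v := by
        rw [← hg1v, mulVec_mulVec, Matrix.nonsing_inv_mul g1 hg1d, one_mulVec]
      have hz : x1 *ᵥ Pi.single (Sum.inl 0) (1:k) = 0 := by
        rw [hx1, ← mulVec_mulVec, ← mulVec_mulVec, hinv, hxv, mulVec_zero]
      intro p
      have := congrFun hz p
      rw [mulVec_single] at this
      simpa using this
    have hrow : ∀ q, x1 (Sum.inr 0) q = 0 := by
      intro q
      have h := hsp1' (Sum.inl 0) q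
      rw [hcol (Sum.swap q)] at h
      exact h.symm
    -- the middle matrix
    set x' : Matrix (Fin n ⊕ Fin n) (Fin n ⊕ Fin n) k := fun p q => x1 (ιm p) (ιm q) with hx'
    have hswapιm : ∀ p : Fin n ⊕ Fin n, ιm (Sum.swap p) = Sum.swap (ιm p) := by
      rintro (j | j) <;> rfl
    have hsp' : x'ᵀ * Jsp k n = Jsp k n * x' := by
      rw [sp_iff]
      intro p q
      show x1 (ιm (Sum.swap q)) (ιm p) = x1 (ιm (Sum.swap p)) (ιm q)
      rw [hswapιm, hswapιm]
      exact hsp1' (ιm p) (ιm q)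
    have hcolpow : ∀ m p, (x1 ^ (m+1)) p (Sum.inl 0) = 0 := by
      intro m p
      rw [pow_succ, mul_apply]
      exact Finset.sum_eq_zero fun r _ => by rw [hcol r, mul_zero]
    have hpow : ∀ m (p q : Fin n ⊕ Fin n), (x1 ^ (m+1)) (ιm p) (ιm q) = (x' ^ (m+1)) p q := by
      intro m
      induction m with
      | zero => intro p q; rw [pow_one, pow_one]
      | succ m IHm =>
        intro p q
        rw [pow_succ x1 (m+1), pow_succ x' (m+1), mul_apply, mul_apply]
        simp only [Fintype.sum_sum_type, Fin.sum_univ_succ]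
        rw [hcolpow m (ιm p), hrow (ιm q)]
        simp only [zero_mul, mul_zero, zero_add, add_zero]
        congr 1
        · refine Finset.sum_congr rfl fun j _ => ?_
          have h1 : (x1 ^ (m+1)) (ιm p) (Sum.inl j.succ) = (x' ^ (m+1)) p (Sum.inl j) :=
            IHm p (Sum.inl j)
          have h2 : x1 (Sum.inl j.succ) (ιm q) = x' (Sum.inl j) q := rfl
          rw [h1, h2]
        · refine Finset.sum_congr rfl fun j _ => ?_
          have h1 : (x1 ^ (m+1)) (ιm p) (Sum.inr j.succ) = (x' ^ (m+1)) p (Sum.inr j) :=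
            IHm p (Sum.inr j)
          have h2 : x1 (Sum.inr j.succ) (ιm q) = x' (Sum.inr j) q := rfl
          rw [h1, h2]
    have hnil' : IsNilpotent x' := by
      obtain ⟨N, hN⟩ := hnil1
      refine ⟨N + 1, ?_⟩
      ext p q
      rw [← hpow N p q, pow_succ, hN, Matrix.zero_mul]
      simp
    obtain ⟨g', hg'u, hg's, hg't⟩ := IH x' hsp' hnil'
    have hg'd : IsUnit g'.det := (Matrix.isUnit_iff_isUnit_det g').mp hg'u
    set G := extM g' with hG
    set G' := extM g'⁻¹ with hG'
    have hGG' : G * G' = 1 := by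
      rw [hG, hG', extM_mul, Matrix.mul_nonsing_inv g' hg'd, extM, fromBlocks_one,
        submatrix_one_equiv]
    have hG'G : G' * G = 1 := by
      rw [hG, hG', extM_mul, Matrix.nonsing_inv_mul g' hg'd, extM, fromBlocks_one,
        submatrix_one_equiv]
    have hGu : IsUnit G := ⟨⟨G, G', hGG', hG'G⟩, rfl⟩
    have hGinv : G⁻¹ = G' := Matrix.inv_eq_right_inv hGG'
    have hGs : Gᵀ * Jsp k (n+1) * G = Jsp k (n+1) := extM_symplectic g' hg's
    -- final conjugating matrix
    refine ⟨G * g1, hGu.mul hg1u, ?_, ?_⟩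
    · calc (G * g1)ᵀ * Jsp k (n+1) * (G * g1)
          = g1ᵀ * (Gᵀ * Jsp k (n+1) * G) * g1 := by rw [transpose_mul]; noncomm_ring
        _ = g1ᵀ * Jsp k (n+1) * g1 := by rw [hGs]
        _ = Jsp k (n+1) := hg1s
    · have hconj : (G * g1) * x * (G * g1)⁻¹ = G * x1 * G' := by
        rw [Matrix.mul_inv_rev, hGinv, hx1]
        noncomm_ring
      rw [hconj]
      -- entry computations
      have hcol2 : ∀ p, (G * x1 * G') p (Sum.inl 0) = 0 := by
        intro p
        rw [Matrix.mul_assoc, mul_apply]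
        refine Finset.sum_eq_zero fun r _ => ?_
        have : (x1 * G') r (Sum.inl 0) = 0 := by
          rw [mul_apply]
          simp only [Fintype.sum_sum_type, Fin.sum_univ_succ, hG', extM_00a, extM_00c,
            extM_l0, extM_r0, mul_zero, mul_one, add_zero, zero_add, Finset.sum_const_zero]
          exact hcol r
        rw [this, mul_zero]
      have hrow2 : ∀ q, (G * x1 * G') (Sum.inr 0) q = 0 := by
        intro q
        rw [Matrix.mul_assoc, mul_apply]
        refine Finset.sum_eq_zero fun r _ => ?_
        rcases r with i | i <;> induction i using Fin.cases
        · rw [hG, extM_00c, zero_mul]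
        · rw [hG, extM_0l', zero_mul]
        · have : (x1 * G') (Sum.inr 0) q = 0 := by
            rw [mul_apply]
            exact Finset.sum_eq_zero fun s _ => by rw [hrow s, zero_mul]
          rw [this, mul_zero]
        · rw [hG, extM_0r', zero_mul]
      have hstep1 : ∀ r q : Fin n ⊕ Fin n,
          (x1 * G') (ιm r) (ιm q) = (x' * g'⁻¹) r q := by
        intro r q
        rw [mul_apply]
        conv_rhs => rw [mul_apply]
        rw [Fintype.sum_sum_type, Fintype.sum_sum_type, Fin.sum_univ_succ, Fin.sum_univ_succ]
        simp only [hG', hcol, zero_mul, extM_0im', mul_zero, zero_add, add_zero,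
          extM_ls_im, extM_rs_im]
        congr 1 <;> exact Finset.sum_congr rfl fun s _ => rfl
      have hmid : ∀ p q : Fin n ⊕ Fin n,
          (G * x1 * G') (ιm p) (ιm q) = (g' * x' * g'⁻¹) p q := by
        intro p q
        rw [Matrix.mul_assoc g' x' g'⁻¹, Matrix.mul_assoc, mul_apply]
        conv_rhs => rw [mul_apply]
        rw [Fintype.sum_sum_type, Fintype.sum_sum_type, Fin.sum_univ_succ, Fin.sum_univ_succ]
        simp only [hG, extM_im_l0, zero_mul, extM_im_r0, zero_add, add_zero,
          extM_im_ls, extM_im_rs]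
        congr 1 <;> refine Finset.sum_congr rfl fun s _ => ?_
        · exact congrArg (fun t => g' p (Sum.inl s) * t) (hstep1 (Sum.inl s) q)
        · exact congrArg (fun t => g' p (Sum.inr s) * t) (hstep1 (Sum.inr s) q)
      -- now do the case analysis
      intro p q hpq
      rcases q with j | j
      · induction j using Fin.cases with
        | zero => exact hcol2 p
        | succ j =>
          rcases p with i | i
          · induction i using Fin.cases with
            | zero =>
              exfalso
              simp only [ordIdx, Sum.elim_inl, Fin.val_succ, Fin.val_zero] at hpq
              omega
            | succ i =>
              have hpq' : ordIdx (ιm (Sum.inl j)) ≤ ordIdx (ιm (Sum.inl i)) := hpq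
              rw [ordIdx_ιm, ordIdx_ιm] at hpq'
              have := hg't (Sum.inl i) (Sum.inl j) (by omega)
              calc (G * x1 * G') (Sum.inl i.succ) (Sum.inl j.succ)
                  = (g' * x' * g'⁻¹) (Sum.inl i) (Sum.inl j) := hmid (Sum.inl i) (Sum.inl j)
                _ = 0 := this
          · induction i using Fin.cases with
            | zero => exact hrow2 _
            | succ i =>
              have hpq' : ordIdx (ιm (Sum.inl j)) ≤ ordIdx (ιm (Sum.inr i)) := hpq
              rw [ordIdx_ιm, ordIdx_ιm] at hpq'
              have := hg't (Sum.inr i) (Sum.inl j) (by omega)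
              calc (G * x1 * G') (Sum.inr i.succ) (Sum.inl j.succ)
                  = (g' * x' * g'⁻¹) (Sum.inr i) (Sum.inl j) := hmid (Sum.inr i) (Sum.inl j)
                _ = 0 := this
      · induction j using Fin.cases with
        | zero =>
          rcases p with i | i
          · exfalso
            have hi := i.isLt
            simp only [ordIdx, Sum.elim_inl, Sum.elim_inr, Fin.val_zero] at hpq
            omega
          · induction i using Fin.cases with
            | zero => exact hrow2 _
            | succ i =>
              exfalso
              have hi := i.isLt
              simp only [ordIdx, Sum.elim_inl, Sum.elim_inr, Fin.val_zero, Fin.val_succ] at hpq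
              omega
        | succ j =>
          rcases p with i | i
          · induction i using Fin.cases with
            | zero =>
              exfalso
              have hj := j.isLt
              simp only [ordIdx, Sum.elim_inl, Sum.elim_inr, Fin.val_zero, Fin.val_succ] at hpq
              omega
            | succ i =>
              have hpq' : ordIdx (ιm (Sum.inr j)) ≤ ordIdx (ιm (Sum.inl i)) := hpq
              rw [ordIdx_ιm, ordIdx_ιm] at hpq'
              have := hg't (Sum.inl i) (Sum.inr j) (by omega)
              calc (G * x1 * G') (Sum.inl i.succ) (Sum.inr j.succ)
                  = (g' * x' * g'⁻¹) (Sum.inl i) (Sum.inr j) := hmid (Sum.inl i) (Sum.inr j)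
                _ = 0 := this
          · induction i using Fin.cases with
            | zero => exact hrow2 _
            | succ i =>
              have hpq' : ordIdx (ιm (Sum.inr j)) ≤ ordIdx (ιm (Sum.inr i)) := hpq
              rw [ordIdx_ιm, ordIdx_ιm] at hpq'
              have := hg't (Sum.inr i) (Sum.inr j) (by omega)
              calc (G * x1 * G') (Sum.inr i.succ) (Sum.inr j.succ)
                  = (g' * x' * g'⁻¹) (Sum.inr i) (Sum.inr j) := hmid (Sum.inr i) (Sum.inr j)
                _ = 0 := this

/-- Every nilpotent element of `𝔰𝔭_{2n}(k)` is `Sp_{2n}(k)`-conjugate to an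
element of `𝔫 = {[[a,b],[0,aᵀ]] : a strictly upper triangular, bᵀ = b}`; equivalently the
nilpotent cone of `𝔰𝔭_{2n}(k)` equals `⋃_{g ∈ Sp_{2n}(k)} g·𝔫·g⁻¹`. -/
theorem stmt_14 (k : Type) [Field k] [IsAlgClosed k] [CharP k 2] (n : ℕ) (hn : 1 ≤ n) :
    (∀ x : Matrix (Fin n ⊕ Fin n) (Fin n ⊕ Fin n) k,
      xᵀ * Jsp k n = Jsp k n * x → IsNilpotent x →
      ∃ (g : Matrix (Fin n ⊕ Fin n) (Fin n ⊕ Fin n) k) (a b : Matrix (Fin n) (Fin n) k),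
        IsUnit g ∧ gᵀ * Jsp k n * g = Jsp k n ∧
        (∀ i j : Fin n, (j : ℕ) ≤ (i : ℕ) → a i j = 0) ∧ bᵀ = b ∧
        g * x * g⁻¹ = Matrix.fromBlocks a b 0 aᵀ) ∧
    {x : Matrix (Fin n ⊕ Fin n) (Fin n ⊕ Fin n) k |
      ∃ (g : Matrix (Fin n ⊕ Fin n) (Fin n ⊕ Fin n) k) (a b : Matrix (Fin n) (Fin n) k),
        IsUnit g ∧ gᵀ * Jsp k n * g = Jsp k n ∧
        (∀ i j : Fin n, (j : ℕ) ≤ (i : ℕ) → a i j = 0) ∧ bᵀ = b ∧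
        x = g * Matrix.fromBlocks a b 0 aᵀ * g⁻¹}
      = {x : Matrix (Fin n ⊕ Fin n) (Fin n ⊕ Fin n) k |
          xᵀ * Jsp k n = Jsp k n * x ∧ IsNilpotent x} := by
  have part1 : ∀ x : Matrix (Fin n ⊕ Fin n) (Fin n ⊕ Fin n) k,
      xᵀ * Jsp k n = Jsp k n * x → IsNilpotent x →
      ∃ (g : Matrix (Fin n ⊕ Fin n) (Fin n ⊕ Fin n) k) (a b : Matrix (Fin n) (Fin n) k),
        IsUnit g ∧ gᵀ * Jsp k n * g = Jsp k n ∧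
        (∀ i j : Fin n, (j : ℕ) ≤ (i : ℕ) → a i j = 0) ∧ bᵀ = b ∧
        g * x * g⁻¹ = Matrix.fromBlocks a b 0 aᵀ := by
    intro x hsp hnil
    obtain ⟨g, hgu, hgs, htri⟩ := mainLemma n x hsp hnil
    have hysp := conj_sp hgu hgs hsp
    have hy := (sp_iff _).mp hysp
    refine ⟨g, fun i j => (g * x * g⁻¹) (Sum.inl i) (Sum.inl j),
      fun i j => (g * x * g⁻¹) (Sum.inl i) (Sum.inr j), hgu, hgs, ?_, ?_, ?_⟩
    · intro i j hij
      exact htri (Sum.inl i) (Sum.inl j) hij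
    · ext i j
      show (g * x * g⁻¹) (Sum.inl j) (Sum.inr i) = (g * x * g⁻¹) (Sum.inl i) (Sum.inr j)
      exact hy (Sum.inr i) (Sum.inr j)
    · ext p q
      rcases p with i | i <;> rcases q with j | j
      · rfl
      · rfl
      · have hij : ordIdx (Sum.inl j) ≤ ordIdx (Sum.inr i) := by
          have hi := i.isLt; have hj := j.isLt
          simp only [ordIdx, Sum.elim_inl, Sum.elim_inr]
          omega
        simpa [fromBlocks] using htri _ _ hij
      · have h := hy (Sum.inr j) (Sum.inl i)
        exact h
  refine ⟨part1, ?_⟩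
  ext x
  simp only [Set.mem_setOf_eq]
  constructor
  · rintro ⟨g, a, b, hgu, hgs, ha, hb, rfl⟩
    have hgd := (Matrix.isUnit_iff_isUnit_det g).mp hgu
    have hmsp : (fromBlocks a b 0 aᵀ)ᵀ * Jsp k n = Jsp k n * fromBlocks a b 0 aᵀ := by
      rw [sp_iff]
      intro p q
      rcases p with i | i <;> rcases q with j | j
      · show (fromBlocks a b 0 aᵀ) (Sum.inr j) (Sum.inl i)
            = (fromBlocks a b 0 aᵀ) (Sum.inr i) (Sum.inl j)
        simp [fromBlocks]
      · rfl
      · rfl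
      · show (fromBlocks a b 0 aᵀ) (Sum.inl j) (Sum.inr i)
            = (fromBlocks a b 0 aᵀ) (Sum.inl i) (Sum.inr j)
        show b j i = b i j
        exact congrFun (congrFun hb i) j
    have hstrict : ∀ p q, ordIdx q ≤ ordIdx p → (fromBlocks a b 0 aᵀ) p q = 0 := by
      rintro (i | i) (j | j) hpq
      · exact ha i j hpq
      · exfalso
        have hi := i.isLt; have hj := j.isLt
        simp only [ordIdx, Sum.elim_inl, Sum.elim_inr] at hpq
        omega
      · rfl
      · have hij : (i : ℕ) ≤ j := by
          have hi := i.isLt; have hj := j.isLt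
          simp only [ordIdx, Sum.elim_inr] at hpq
          omega
        exact ha j i hij
    have hm0 : (fromBlocks a b 0 aᵀ) ^ (2*n) = 0 :=
      pow_strict_zero ordIdx (2*n) ordIdx_lt _ hstrict
    refine ⟨conj_sp hgu hgs hmsp, ⟨2*n, ?_⟩⟩
    rw [conjPowMat hgd, hm0, Matrix.mul_zero, Matrix.zero_mul]
  · rintro ⟨hsp, hnil⟩
    obtain ⟨g, a, b, hgu, hgs, ha, hb, hconj⟩ := part1 x hsp hnil
    have hgd := (Matrix.isUnit_iff_isUnit_det g).mp hgu
    refine ⟨g⁻¹, a, b,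
      ⟨⟨g⁻¹, g, Matrix.nonsing_inv_mul g hgd, Matrix.mul_nonsing_inv g hgd⟩, rfl⟩,
      inv_symplectic hgu hgs, ha, hb, ?_⟩
    rw [Matrix.nonsing_inv_nonsing_inv g hgd, ← hconj]
    calc x = (g⁻¹ * g) * x * (g⁻¹ * g) := by
          rw [Matrix.nonsing_inv_mul g hgd]; noncomm_ring
      _ = g⁻¹ * (g * x * g⁻¹) * g := by noncomm_ring
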